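/- Let m, d, q, r be positive integers, Q^{(s)}_{j} ∈ ℂ^{m×m} for s ∈ {1,…,r} and j ∈ {0,…,q}^d, and suppose P(z) = Σ_{s=1}^{r} Q^{(s)}(z)† Q^{(s)}(z) for every z ∈ 𝕋^d, where Q^{(s)}(z) = Σ_j Q^{(s)}_j z^j. Let M be a real m×m positive-definite diagonal matrix and set ω_D² = sup_{z∈𝕋^d} ‖M^{−1/2} P(z) M^{−1/2}‖ (operator norm). Then Σ_{s=1}^{r} Σ_{j∈{0,…,q}^d} ‖Q^{(s)}_j M^{−1/2}‖_F² ≤ m·ω_D². -/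

import Mathlib

open Matrix


lemma root_orth (n : ℕ) (hn : 0 < n) (j j' : Fin n) :
    ∑ k : Fin n, (starRingEnd ℂ) ((Complex.exp (2 * Real.pi * Complex.I / n)) ^ ((k : ℕ) * (j : ℕ)))
        * (Complex.exp (2 * Real.pi * Complex.I / n)) ^ ((k : ℕ) * (j' : ℕ))
      = if j = j' then (n : ℂ) else 0 := by
  set ζ := Complex.exp (2 * Real.pi * Complex.I / n) with hζ
  have hprim : IsPrimitiveRoot ζ n := Complex.isPrimitiveRoot_exp n hn.ne'
  have hne : ζ ≠ 0 := Complex.exp_ne_zero _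
  have habs : ‖ζ‖ = 1 := by
    rw [hζ, Complex.norm_exp]
    have : (2 * Real.pi * Complex.I / n).re = 0 := by simp [Complex.div_re]
    rw [this, Real.exp_zero]
  have hconj : (starRingEnd ℂ) ζ = ζ⁻¹ := (Complex.inv_eq_conj habs).symm
  by_cases h : j = j'
  · subst h
    simp only [if_pos rfl]
    have : ∀ k : Fin n, (starRingEnd ℂ) (ζ ^ ((k : ℕ) * (j : ℕ))) * ζ ^ ((k : ℕ) * (j : ℕ)) = 1 := by
      intro k
      rw [mul_comm, Complex.mul_conj, map_pow]
      have : Complex.normSq ζ = 1 := by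
        rw [← Complex.sq_norm, habs]; norm_num
      rw [this]; norm_num
    rw [Finset.sum_congr rfl fun k _ => this k]
    simp
  · rw [if_neg h]
    set x : ℂ := ζ ^ ((j' : ℤ) - (j : ℤ)) with hx
    have hterm : ∀ k : Fin n,
        (starRingEnd ℂ) (ζ ^ ((k : ℕ) * (j : ℕ))) * ζ ^ ((k : ℕ) * (j' : ℕ)) = x ^ (k : ℕ) := by
      intro k
      rw [map_pow, hconj, hx]
      rw [← zpow_natCast (ζ⁻¹) _, ← zpow_natCast ζ ((k : ℕ) * (j' : ℕ)), _root_.inv_zpow,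
        ← _root_.zpow_neg, ← zpow_add₀ hne, ← zpow_natCast _ (k : ℕ), ← _root_.zpow_mul]
      congr 1
      push_cast
      ring
    rw [Finset.sum_congr rfl fun k _ => hterm k, Fin.sum_univ_eq_sum_range]
    have hx1 : x ≠ 1 := by
      intro hc
      apply h
      have hdvd : (n : ℤ) ∣ ((j' : ℤ) - (j : ℤ)) := by
        rwa [← hprim.zpow_eq_one_iff_dvd]
      have : ((j' : ℤ) - (j : ℤ)) = 0 := by
        refine Int.eq_zero_of_abs_lt_dvd hdvd ?_
        rw [abs_sub_lt_iff]
        constructor <;> [skip; skip] <;>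
          · have h1 := j.isLt; have h2 := j'.isLt; omega
      have : (j : ℤ) = (j' : ℤ) := by omega
      exact Fin.ext (by exact_mod_cast this)
    have hxn : x ^ n = 1 := by
      rw [hx, ← zpow_natCast, ← _root_.zpow_mul, mul_comm, _root_.zpow_mul, zpow_natCast,
        hprim.pow_eq_one, _root_.one_zpow]
    have := geom_sum_mul x n
    rw [hxn, sub_self] at this
    rcases mul_eq_zero.mp this with h0 | h0
    · exact h0
    · exact absurd (sub_eq_zero.mp h0) hx1

lemma entry_re_le (m : ℕ) (A : Matrix (Fin m) (Fin m) ℂ) (a : Fin m) :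
    (A a a).re ≤ ‖Matrix.toEuclideanCLM (𝕜 := ℂ) A‖ := by
  have h : inner ℂ (EuclideanSpace.single a (1:ℂ)) ((Matrix.toEuclideanCLM (𝕜 := ℂ) A) (EuclideanSpace.single a 1)) = A a a := by
    rw [EuclideanSpace.inner_single_left]
    simp only [_root_.map_one, one_mul]
    have : (EuclideanSpace.single a (1:ℂ)) = WithLp.toLp 2 (Pi.single a 1) := rfl
    rw [this, Matrix.toEuclideanCLM_toLp]
    simp [Matrix.toLin'_apply, Matrix.mulVec_single]
  rw [← h]
  calc (inner ℂ (EuclideanSpace.single a (1:ℂ)) ((Matrix.toEuclideanCLM (𝕜 := ℂ) A) (EuclideanSpace.single a 1)) : ℂ).re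
      ≤ ‖(inner ℂ (EuclideanSpace.single a (1:ℂ)) ((Matrix.toEuclideanCLM (𝕜 := ℂ) A) (EuclideanSpace.single a 1)) : ℂ)‖ :=
        Complex.re_le_norm _
    _ ≤ ‖EuclideanSpace.single a (1:ℂ)‖ * ‖(Matrix.toEuclideanCLM (𝕜 := ℂ) A) (EuclideanSpace.single a 1)‖ :=
        norm_inner_le_norm _ _
    _ ≤ ‖EuclideanSpace.single a (1:ℂ)‖ * (‖Matrix.toEuclideanCLM (𝕜 := ℂ) A‖ * ‖EuclideanSpace.single a (1:ℂ)‖) := by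
        gcongr; exact (Matrix.toEuclideanCLM (𝕜 := ℂ) A).le_opNorm _
    _ = ‖Matrix.toEuclideanCLM (𝕜 := ℂ) A‖ := by
        have h1 : ‖EuclideanSpace.single a (1:ℂ)‖ = 1 := by
          rw [EuclideanSpace.norm_single]; norm_num
        rw [h1]; ring

lemma trace_re_le (m : ℕ) (A : Matrix (Fin m) (Fin m) ℂ) :
    (Matrix.trace A).re ≤ m * ‖Matrix.toEuclideanCLM (𝕜 := ℂ) A‖ := by
  rw [Matrix.trace, Complex.re_sum]
  calc ∑ a, (A.diag a).re ≤ ∑ a : Fin m, ‖Matrix.toEuclideanCLM (𝕜 := ℂ) A‖ :=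
        Finset.sum_le_sum fun a _ => entry_re_le m A a
    _ = m * ‖Matrix.toEuclideanCLM (𝕜 := ℂ) A‖ := by
        rw [Finset.sum_const, Finset.card_univ, Fintype.card_fin, nsmul_eq_mul]


set_option maxHeartbeats 1000000 in
set_option synthInstance.maxHeartbeats 1000000 in
/-- bound on the mass-weighted Fejér–Riesz coefficients: if
`P(z) = ∑_s Q^{(s)}(z)ᴴ Q^{(s)}(z)` on the `d`-torus with
`Q^{(s)}(z) = ∑_{j∈{0,…,q}^d} Q^{(s)}_j z^j`, `M` a positive diagonal mass matrix, and
`ω_D² = sup_{z∈𝕋^d} ‖M^{-1/2} P(z) M^{-1/2}‖` (operator norm), then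
`∑_s ∑_j ‖Q^{(s)}_j M^{-1/2}‖_F² ≤ m · ω_D²`. -/
theorem mass_weighted_coefficient_bound
    (m d q r : ℕ) (hm : 0 < m) (hd : 0 < d) (hq : 0 < q) (hr : 0 < r)
    (Qc : Fin r → (Fin d → Fin (q + 1)) → Matrix (Fin m) (Fin m) ℂ)
    (P : (Fin d → ℂ) → Matrix (Fin m) (Fin m) ℂ)
    (hfact : ∀ z : Fin d → ℂ, (∀ i, ‖z i‖ = 1) →
      P z = ∑ s : Fin r,
        (∑ j : Fin d → Fin (q + 1), (∏ i, z i ^ (j i : ℕ)) • Qc s j)ᴴ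
          * (∑ j : Fin d → Fin (q + 1), (∏ i, z i ^ (j i : ℕ)) • Qc s j))
    (Mdiag : Fin m → ℝ) (hM : ∀ a, 0 < Mdiag a)
    (ωD2 : ℝ)
    (hω : ωD2 = ⨆ z : {z : Fin d → ℂ // ∀ i, ‖z i‖ = 1},
      ‖Matrix.toEuclideanCLM (𝕜 := ℂ)
        (((Matrix.diagonal fun a => (Real.sqrt (Mdiag a))⁻¹).map (fun x : ℝ => (x : ℂ)))
          * P z.1
          * ((Matrix.diagonal fun a => (Real.sqrt (Mdiag a))⁻¹).map (fun x : ℝ => (x : ℂ))))‖) :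
    (∑ s : Fin r, ∑ j : Fin d → Fin (q + 1), ∑ a : Fin m, ∑ b : Fin m,
        ‖(Qc s j *
          ((Matrix.diagonal fun a => (Real.sqrt (Mdiag a))⁻¹).map (fun x : ℝ => (x : ℂ)))) a b‖ ^ 2)
      ≤ (m : ℝ) * ωD2 := by
  set Minv : Matrix (Fin m) (Fin m) ℂ :=
    (Matrix.diagonal fun a => (Real.sqrt (Mdiag a))⁻¹).map (fun x : ℝ => (x : ℂ)) with hMinv
  have hnpos : 0 < q + 1 := Nat.succ_pos q
  set ζ : ℂ := Complex.exp (2 * Real.pi * Complex.I / (q + 1 : ℕ)) with hζ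
  have habs : ‖ζ‖ = 1 := by
    rw [hζ, Complex.norm_exp]
    have : (2 * Real.pi * Complex.I / (q + 1 : ℕ)).re = 0 := by simp [Complex.div_re]
    rw [this, Real.exp_zero]
  -- the sampling grid
  set z : (Fin d → Fin (q + 1)) → (Fin d → ℂ) := fun k i => ζ ^ (k i : ℕ) with hzdef
  have hz : ∀ k, ∀ i, ‖z k i‖ = 1 := by
    intro k i
    rw [hzdef]
    simp only [norm_pow, habs, one_pow]
  -- Minv is self-adjoint
  have hMinvH : Minvᴴ = Minv := by
    ext a b
    by_cases h : a = b
    · subst h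
      simp [hMinv, Matrix.conjTranspose_apply, Matrix.map_apply, Complex.conj_ofReal]
    · simp [hMinv, Matrix.conjTranspose_apply, Matrix.map_apply,
        Matrix.diagonal_apply_ne _ h, Matrix.diagonal_apply_ne _ (Ne.symm h)]
  -- Step A : trace identity on the torus
  have stepA : ∀ w : Fin d → ℂ, (∀ i, ‖w i‖ = 1) →
      Matrix.trace (Minv * P w * Minv) =
        ∑ s : Fin r, ∑ j : Fin d → Fin (q + 1), ∑ j' : Fin d → Fin (q + 1),
          ((starRingEnd ℂ) (∏ i, w i ^ (j i : ℕ)) * (∏ i, w i ^ (j' i : ℕ)))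
            * Matrix.trace ((Qc s j * Minv)ᴴ * (Qc s j' * Minv)) := by
    intro w hw
    rw [hfact w hw]
    rw [Finset.mul_sum, Finset.sum_mul, Matrix.trace_sum]
    refine Finset.sum_congr rfl fun s _ => ?_
    simp only [conjTranspose_sum, conjTranspose_smul, conjTranspose_mul, hMinvH,
      Finset.sum_mul, Finset.mul_sum, smul_mul_assoc, mul_smul_comm,
      Matrix.trace_sum, Matrix.trace_smul, smul_eq_mul, starRingEnd_apply]
    rw [Finset.sum_comm]
    refine Finset.sum_congr rfl fun j _ => Finset.sum_congr rfl fun j' _ => ?_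
    rw [show Minv * ((Qc s j)ᴴ * Qc s j') * Minv = Minv * (Qc s j)ᴴ * (Qc s j' * Minv) by
      simp only [Matrix.mul_assoc]]
    ring
  -- orthogonality over the grid
  have orth : ∀ j j' : Fin d → Fin (q + 1),
      (∑ k : Fin d → Fin (q + 1),
        (starRingEnd ℂ) (∏ i, z k i ^ (j i : ℕ)) * (∏ i, z k i ^ (j' i : ℕ)))
      = if j = j' then (((q + 1 : ℕ) : ℂ)) ^ d else 0 := by
    intro j j'
    have hterm : ∀ k : Fin d → Fin (q + 1),
        (starRingEnd ℂ) (∏ i, z k i ^ (j i : ℕ)) * (∏ i, z k i ^ (j' i : ℕ))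
          = ∏ i, ((starRingEnd ℂ) (ζ ^ ((k i : ℕ) * (j i : ℕ))) * ζ ^ ((k i : ℕ) * (j' i : ℕ))) := by
      intro k
      rw [map_prod, ← Finset.prod_mul_distrib]
      refine Finset.prod_congr rfl fun i _ => ?_
      rw [hzdef]
      rw [← pow_mul, ← pow_mul]
    rw [Finset.sum_congr rfl fun k _ => hterm k]
    rw [← Fintype.prod_sum (fun (i : Fin d) (t : Fin (q + 1)) =>
      (starRingEnd ℂ) (ζ ^ ((t : ℕ) * (j i : ℕ))) * ζ ^ ((t : ℕ) * (j' i : ℕ)))]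
    rw [Finset.prod_congr rfl fun i _ => root_orth (q + 1) hnpos (j i) (j' i)]
    by_cases h : j = j'
    · subst h
      simp
    · rw [if_neg h]
      obtain ⟨i, hi⟩ : ∃ i, j i ≠ j' i := by
        by_contra hc
        push_neg at hc
        exact h (funext hc)
      exact Finset.prod_eq_zero (Finset.mem_univ i) (if_neg hi)
  -- Step C : trace of Bᴴ B is the Frobenius norm squared
  have stepC : ∀ (B : Matrix (Fin m) (Fin m) ℂ),
      Matrix.trace (Bᴴ * B) = ((∑ a : Fin m, ∑ b : Fin m, ‖B a b‖ ^ 2 : ℝ) : ℂ) := by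
    intro B
    rw [Matrix.trace]
    push_cast
    rw [Finset.sum_comm]
    refine Finset.sum_congr rfl fun b _ => ?_
    simp only [Matrix.diag_apply, Matrix.mul_apply, Matrix.conjTranspose_apply]
    refine Finset.sum_congr rfl fun a _ => ?_
    rw [show star (B a b) * B a b = ((starRingEnd ℂ) (B a b)) * B a b from rfl,
      ← Complex.normSq_eq_conj_mul_self, Complex.normSq_eq_norm_sq]
    norm_cast
  -- Step B : sum over the grid
  have stepB : ∑ k : Fin d → Fin (q + 1), Matrix.trace (Minv * P (z k) * Minv)
      = (((q + 1 : ℕ) : ℂ)) ^ d *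
          ((∑ s : Fin r, ∑ j : Fin d → Fin (q + 1), ∑ a : Fin m, ∑ b : Fin m,
            ‖(Qc s j * Minv) a b‖ ^ 2 : ℝ) : ℂ) := by
    rw [Finset.sum_congr rfl fun k _ => stepA (z k) (hz k)]
    rw [Finset.sum_comm]
    have swap2 : ∀ s : Fin r,
        ∑ k : Fin d → Fin (q + 1), ∑ j : Fin d → Fin (q + 1), ∑ j' : Fin d → Fin (q + 1),
          ((starRingEnd ℂ) (∏ i, z k i ^ (j i : ℕ)) * (∏ i, z k i ^ (j' i : ℕ)))
            * Matrix.trace ((Qc s j * Minv)ᴴ * (Qc s j' * Minv))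
        = (((q + 1 : ℕ) : ℂ)) ^ d * ∑ j : Fin d → Fin (q + 1),
            Matrix.trace ((Qc s j * Minv)ᴴ * (Qc s j * Minv)) := by
      intro s
      rw [Finset.sum_comm]
      rw [Finset.mul_sum]
      refine Finset.sum_congr rfl fun j _ => ?_
      rw [Finset.sum_comm]
      have : ∀ j' : Fin d → Fin (q + 1),
          (∑ k : Fin d → Fin (q + 1),
            ((starRingEnd ℂ) (∏ i, z k i ^ (j i : ℕ)) * (∏ i, z k i ^ (j' i : ℕ)))
              * Matrix.trace ((Qc s j * Minv)ᴴ * (Qc s j' * Minv)))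
          = (if j = j' then (((q + 1 : ℕ) : ℂ)) ^ d else 0)
              * Matrix.trace ((Qc s j * Minv)ᴴ * (Qc s j' * Minv)) := by
        intro j'
        rw [← Finset.sum_mul, orth j j']
      rw [Finset.sum_congr rfl fun j' _ => this j']
      simp only [ite_mul, zero_mul]
      rw [Finset.sum_ite_eq Finset.univ j (fun j' => (((q + 1 : ℕ) : ℂ)) ^ d
        * Matrix.trace ((Qc s j * Minv)ᴴ * (Qc s j' * Minv)))]
      simp
    rw [Finset.sum_congr rfl fun s _ => swap2 s]
    rw [← Finset.mul_sum]
    congr 1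
    push_cast
    rw [Finset.sum_congr rfl fun s _ => Finset.sum_congr rfl fun j _ => stepC (Qc s j * Minv)]
    push_cast
    ring
  -- bounded above
  have hbdd : BddAbove (Set.range fun (w : {z : Fin d → ℂ // ∀ i, ‖z i‖ = 1}) =>
      ‖Matrix.toEuclideanCLM (𝕜 := ℂ) (Minv * P w.1 * Minv)‖) := by
    refine ⟨‖Matrix.toEuclideanCLM (𝕜 := ℂ) Minv‖ *
      (∑ s : Fin r, (∑ j : Fin d → Fin (q + 1),
        ‖Matrix.toEuclideanCLM (𝕜 := ℂ) (Qc s j)‖) ^ 2) *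
      ‖Matrix.toEuclideanCLM (𝕜 := ℂ) Minv‖, ?_⟩
    rintro x ⟨w, rfl⟩
    have hPw : ‖Matrix.toEuclideanCLM (𝕜 := ℂ) (P w.1)‖ ≤
        ∑ s : Fin r, (∑ j : Fin d → Fin (q + 1),
          ‖Matrix.toEuclideanCLM (𝕜 := ℂ) (Qc s j)‖) ^ 2 := by
      rw [hfact w.1 w.2, map_sum]
      refine (norm_sum_le _ _).trans (Finset.sum_le_sum fun s _ => ?_)
      rw [_root_.map_mul]
      have hQ : ‖Matrix.toEuclideanCLM (𝕜 := ℂ)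
          (∑ j : Fin d → Fin (q + 1), (∏ i, w.1 i ^ (j i : ℕ)) • Qc s j)‖ ≤
          ∑ j : Fin d → Fin (q + 1), ‖Matrix.toEuclideanCLM (𝕜 := ℂ) (Qc s j)‖ := by
        rw [map_sum]
        refine (norm_sum_le _ _).trans (Finset.sum_le_sum fun j _ => ?_)
        rw [_root_.map_smul]
        have h1 : ‖∏ i, w.1 i ^ (j i : ℕ)‖ = 1 := by
          rw [norm_prod]
          refine Finset.prod_eq_one fun i _ => ?_
          rw [norm_pow, w.2 i, one_pow]
        refine (ContinuousLinearMap.opNorm_smul_le _ _).trans ?_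
        rw [h1, one_mul]
      have hstar : ‖Matrix.toEuclideanCLM (𝕜 := ℂ)
          ((∑ j : Fin d → Fin (q + 1), (∏ i, w.1 i ^ (j i : ℕ)) • Qc s j)ᴴ)‖ ≤
          ∑ j : Fin d → Fin (q + 1), ‖Matrix.toEuclideanCLM (𝕜 := ℂ) (Qc s j)‖ := by
        rw [show ((∑ j : Fin d → Fin (q + 1), (∏ i, w.1 i ^ (j i : ℕ)) • Qc s j)ᴴ)
            = star (∑ j : Fin d → Fin (q + 1), (∏ i, w.1 i ^ (j i : ℕ)) • Qc s j) from rfl,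
          map_star, ContinuousLinearMap.star_eq_adjoint]
        rw [ContinuousLinearMap.adjoint.norm_map]
        exact hQ
      calc ‖Matrix.toEuclideanCLM (𝕜 := ℂ)
              ((∑ j : Fin d → Fin (q + 1), (∏ i, w.1 i ^ (j i : ℕ)) • Qc s j)ᴴ) *
            Matrix.toEuclideanCLM (𝕜 := ℂ)
              (∑ j : Fin d → Fin (q + 1), (∏ i, w.1 i ^ (j i : ℕ)) • Qc s j)‖
          ≤ ‖Matrix.toEuclideanCLM (𝕜 := ℂ)
              ((∑ j : Fin d → Fin (q + 1), (∏ i, w.1 i ^ (j i : ℕ)) • Qc s j)ᴴ)‖ *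
            ‖Matrix.toEuclideanCLM (𝕜 := ℂ)
              (∑ j : Fin d → Fin (q + 1), (∏ i, w.1 i ^ (j i : ℕ)) • Qc s j)‖ :=
            norm_mul_le _ _
        _ ≤ (∑ j : Fin d → Fin (q + 1), ‖Matrix.toEuclideanCLM (𝕜 := ℂ) (Qc s j)‖) ^ 2 := by
            rw [sq]
            exact mul_le_mul hstar hQ (norm_nonneg _)
              (Finset.sum_nonneg fun j _ => norm_nonneg _)
    calc ‖Matrix.toEuclideanCLM (𝕜 := ℂ) (Minv * P w.1 * Minv)‖
        = ‖Matrix.toEuclideanCLM (𝕜 := ℂ) Minv * Matrix.toEuclideanCLM (𝕜 := ℂ) (P w.1) *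
            Matrix.toEuclideanCLM (𝕜 := ℂ) Minv‖ := by rw [_root_.map_mul, _root_.map_mul]
      _ ≤ ‖Matrix.toEuclideanCLM (𝕜 := ℂ) Minv * Matrix.toEuclideanCLM (𝕜 := ℂ) (P w.1)‖ *
            ‖Matrix.toEuclideanCLM (𝕜 := ℂ) Minv‖ := norm_mul_le _ _
      _ ≤ (‖Matrix.toEuclideanCLM (𝕜 := ℂ) Minv‖ * ‖Matrix.toEuclideanCLM (𝕜 := ℂ) (P w.1)‖) *
            ‖Matrix.toEuclideanCLM (𝕜 := ℂ) Minv‖ :=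
          mul_le_mul_of_nonneg_right (norm_mul_le _ _) (norm_nonneg _)
      _ ≤ ‖Matrix.toEuclideanCLM (𝕜 := ℂ) Minv‖ *
            (∑ s : Fin r, (∑ j : Fin d → Fin (q + 1),
              ‖Matrix.toEuclideanCLM (𝕜 := ℂ) (Qc s j)‖) ^ 2) *
            ‖Matrix.toEuclideanCLM (𝕜 := ℂ) Minv‖ := by
          refine mul_le_mul_of_nonneg_right ?_ (norm_nonneg _)
          exact mul_le_mul_of_nonneg_left hPw (norm_nonneg _)
  -- per grid point bound
  have hpoint : ∀ k : Fin d → Fin (q + 1),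
      (Matrix.trace (Minv * P (z k) * Minv)).re ≤ m * ωD2 := by
    intro k
    refine (trace_re_le m _).trans ?_
    refine mul_le_mul_of_nonneg_left ?_ (Nat.cast_nonneg m)
    rw [hω]
    exact le_ciSup hbdd ⟨z k, hz k⟩
  -- assemble
  set S : ℝ := ∑ s : Fin r, ∑ j : Fin d → Fin (q + 1), ∑ a : Fin m, ∑ b : Fin m,
    ‖(Qc s j * Minv) a b‖ ^ 2 with hS
  have h1 : ((q + 1 : ℕ) : ℝ) ^ d * S = (∑ k : Fin d → Fin (q + 1),
      Matrix.trace (Minv * P (z k) * Minv)).re := by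
    rw [stepB]
    rw [show (((q + 1 : ℕ) : ℂ)) ^ d * ((S : ℝ) : ℂ) = ((((q + 1 : ℕ) : ℝ) ^ d * S : ℝ) : ℂ) by
      push_cast; ring]
    rw [Complex.ofReal_re]
  have h2 : ((q + 1 : ℕ) : ℝ) ^ d * S ≤ ((q + 1 : ℕ) : ℝ) ^ d * ((m : ℝ) * ωD2) := by
    rw [h1, Complex.re_sum]
    calc ∑ k : Fin d → Fin (q + 1), (Matrix.trace (Minv * P (z k) * Minv)).re
        ≤ ∑ _k : Fin d → Fin (q + 1), (m : ℝ) * ωD2 :=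
          Finset.sum_le_sum fun k _ => hpoint k
      _ = ((q + 1 : ℕ) : ℝ) ^ d * ((m : ℝ) * ωD2) := by
          rw [Finset.sum_const, Finset.card_univ, nsmul_eq_mul]
          congr 1
          rw [Fintype.card_pi]
          push_cast
          simp
  have hpow : (0 : ℝ) < ((q + 1 : ℕ) : ℝ) ^ d := by positivity
  exact le_of_mul_le_mul_left h2 hpow
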